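/- Let $a \geq 2$ be an integer and let $p, q, s$ be reals with $p \geq q > s > 0$. Define $D = 2^a(2p - 3q + s) + 4^a(q+s) - 2p + 2q$ and, for an integer $b$ with $0 \leq b \leq a$, the inverted-ranking hierarchy estimate $\bar h_1^{(i)}(b) = \frac{2^{-b}(2^b - 2^a)\left(2^{a+b}(q - 3s) + (4^a - 6)q + 6p\right)}{3D}$. Then $\bar h_1^{(i)}(b) \leq 0$ for every integer $b \in \{0, 1, \dots, a\}$; i.e., in the twitter-like regime no inverted ranking has positive hierarchy. -/

import Mathlib

/-- In the twitter-like regime `p ≥ q > s > 0` of the RSBM with `2^a` equal classes,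
the first-order hierarchy estimate of every inverted merged ranking is nonpositive. -/
theorem stmt_3 (a : ℕ) (ha : 2 ≤ a) (p q s : ℝ) (hpq : q ≤ p) (hqs : s < q) (hs : 0 < s) :
    ∀ b : ℕ, b ≤ a →
      ((2 : ℝ) ^ b)⁻¹ * ((2 : ℝ) ^ b - (2 : ℝ) ^ a) *
          ((2 : ℝ) ^ (a + b) * (q - 3 * s) + ((4 : ℝ) ^ a - 6) * q + 6 * p) /
        (3 * ((2 : ℝ) ^ a * (2 * p - 3 * q + s) + (4 : ℝ) ^ a * (q + s) - 2 * p + 2 * q))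
        ≤ 0 := by
  intro b hb
  set x : ℝ := (2 : ℝ) ^ a with hxdef
  set y : ℝ := (2 : ℝ) ^ b with hydef
  have hx0 : (0:ℝ) < x := by positivity
  have hy0 : (0:ℝ) < y := by positivity
  have hx4 : (4:ℝ) ≤ x := by
    calc (4:ℝ) = 2^2 := by norm_num
    _ ≤ x := by exact pow_le_pow_right₀ (by norm_num) ha
  have hy1 : (1:ℝ) ≤ y := one_le_pow₀ (by norm_num : (1:ℝ) ≤ 2)
  have h4 : (4:ℝ) ^ a = x ^ 2 := by
    rw [hxdef, ← pow_mul, pow_mul']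
    norm_num
  have hab : (2:ℝ) ^ (a + b) = x * y := by rw [pow_add]
  rw [h4, hab]
  have hD : 0 ≤ 3 * (x * (2 * p - 3 * q + s) + x ^ 2 * (q + s) - 2 * p + 2 * q) := by
    nlinarith [mul_nonneg (sub_nonneg.2 hx4) (sub_nonneg.2 hqs.le),
      mul_pos hx0 hs, mul_nonneg hx0.le (sub_nonneg.2 hpq),
      mul_nonneg (mul_nonneg hx0.le hx0.le) hs.le,
      mul_nonneg (mul_nonneg (sub_nonneg.2 hx4) (sub_nonneg.2 hx4)) (le_of_lt (hs.trans hqs))]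
  apply div_nonpos_of_nonpos_of_nonneg _ hD
  rcases eq_or_lt_of_le hb with rfl | hlt
  · simp [hxdef, hydef]
  · have h2y : 2 * y ≤ x := by
      have : (2:ℝ) ^ (b + 1) ≤ (2:ℝ) ^ a :=
        pow_le_pow_right₀ (by norm_num) hlt
      rw [pow_succ] at this
      linarith
    have hq0 : 0 < q := hs.trans hqs
    have hN : 0 ≤ x * y * (q - 3 * s) + (x ^ 2 - 6) * q + 6 * p := by
      nlinarith [mul_nonneg (mul_nonneg hx0.le hy0.le) (sub_nonneg.2 hqs.le),
        mul_nonneg (mul_nonneg (sub_nonneg.2 h2y) hx0.le) hq0.le,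
        mul_nonneg (mul_nonneg (sub_nonneg.2 h2y) hy0.le) hq0.le]
    have hyx : y ≤ x := by linarith
    exact mul_nonpos_of_nonpos_of_nonneg
      (mul_nonpos_of_nonneg_of_nonpos (inv_nonneg.2 hy0.le) (by linarith)) hN
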